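/- Let q ∈ ℕ_S and v_p ∈ ℤ_S^d with gcd(q, v_p) = 1. Fix any γ ∈ SL_d(ℤ_S) with v_p · γ^{−1} ∈ ℤ_S · e_d, and let Γ₁(q) = {γ' ∈ SL_d(ℤ_S) : e_d γ' ≡ e_d mod q}. Then the assignment (γ^{−1}Γ₁(q)γ) g ↦ (ℤ_S^d + v_p/q) g is a well-defined bijection from the left quotient γ^{−1}Γ₁(q)γ\UL_d(ℚ_S) onto the set Y_{v_p/q} = {(ℤ_S^d + v_p/q) g : g ∈ UL_d(ℚ_S)} of translated unimodular S-lattices. -/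

import Mathlib

open MeasureTheory Matrix Set
open scoped BigOperators NNReal ENNReal

noncomputable section

namespace SArith

instance (p : Nat.Primes) : Fact (Nat.Prime (p : ℕ)) := ⟨p.2⟩

instance (p : ℕ) [Fact p.Prime] : MeasurableSpace ℚ_[p] := borel _
instance (p : ℕ) [Fact p.Prime] : BorelSpace ℚ_[p] := ⟨rfl⟩

instance {m n : ℕ} {α : Type*} [MeasurableSpace α] :
    MeasurableSpace (Matrix (Fin m) (Fin n) α) :=
  inferInstanceAs (MeasurableSpace (Fin m → Fin n → α))

/-- Strict fundamental domain `F` for the left multiplication action of `Γ` on `Gs`. -/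
def IsStrictFD {G : Type*} [Mul G] (Γ Gs F : Set G) : Prop :=
  F ⊆ Gs ∧ ∀ g ∈ Gs, ∃! γ, γ ∈ Γ ∧ γ * g ∈ F

/-- `UL_m(ℚ_p)` for a finite prime `p`. -/
def ULp (p : ℕ) [Fact p.Prime] (m : ℕ) : Set (Matrix (Fin m) (Fin m) ℚ_[p]) :=
  {g | ‖g.det‖ = 1}

/-- `SL_m(ℚ_p)` for a finite prime `p`. -/
def SLp (p : ℕ) [Fact p.Prime] (m : ℕ) : Set (Matrix (Fin m) (Fin m) ℚ_[p]) :=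
  {g | g.det = 1}

/-- The Haar measure on `ℚ_p^m`, normalized so that `ℤ_p^m` has measure `1`. -/
def IsVolP (p : ℕ) [Fact p.Prime] (m : ℕ) (vol : Measure (Fin m → ℚ_[p])) : Prop :=
  (∀ x, Measure.map (fun y => x + y) vol = vol) ∧ vol {x | ∀ i, ‖x i‖ ≤ 1} = 1

variable (Sf : Finset Nat.Primes)

/-- The S-adic ring `ℚ_S = ℝ × ∏_{p ∈ S_f} ℚ_p`. -/
abbrev QS : Type := ℝ × ((p : Sf) → ℚ_[(p.1 : ℕ)])

/-- Diagonal embedding of `ℚ` into `ℚ_S`. -/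
def diagQ (x : ℚ) : QS Sf := (x, fun p => (x : ℚ_[(p.1 : ℕ)]))

/-- `z` is an `S`-integer. -/
def IsSInt (z : ℚ) : Prop := ∀ q : Nat.Primes, q ∉ Sf → padicNorm q z ≤ 1

/-- Vectors over ℚ_S. -/
abbrev QV (d : ℕ) : Type := Fin d → QS Sf

def ratVec {d : ℕ} (k : Fin d → ℚ) : QV Sf d := fun i => diagQ Sf (k i)

def IsSIntVec {d : ℕ} (k : Fin d → ℚ) : Prop := ∀ i, IsSInt Sf (k i)

/-- the euclidean norm of the archimedean component. -/
def normInf {d : ℕ} (v : QV Sf d) : ℝ := Real.sqrt (∑ i, ((v i).1) ^ 2)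

/-- the max norm of the component at the finite place `p`. -/
def normFin {d : ℕ} (v : QV Sf d) (p : Sf) : ℝ := ⨆ i, ‖(v i).2 p‖

abbrev Mat (d : ℕ) : Type := Matrix (Fin d) (Fin d) (QS Sf)

def matInf {d : ℕ} (g : Mat Sf d) : Matrix (Fin d) (Fin d) ℝ := fun i j => (g i j).1

def matFin {d : ℕ} (g : Mat Sf d) (p : Sf) : Matrix (Fin d) (Fin d) ℚ_[(p.1 : ℕ)] :=
  fun i j => (g i j).2 p

def matDiag {d : ℕ} (γ : Matrix (Fin d) (Fin d) ℚ) : Mat Sf d := fun i j => diagQ Sf (γ i j)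

/-- `UL_d(ℚ_S)`. -/
def ULset (d : ℕ) : Set (Mat Sf d) :=
  {g | (Matrix.det g).1 = 1 ∧ ∀ p : Sf, ‖(Matrix.det g).2 p‖ = 1}

/-- `SL_d(ℚ_S)`. -/
def SLQS (d : ℕ) : Set (Mat Sf d) := {g | Matrix.det g = 1}

/-- `SL_d(ℤ_S)` as a set of rational matrices. -/
def SLZS (d : ℕ) : Set (Matrix (Fin d) (Fin d) ℚ) :=
  {γ | (∀ i j, IsSInt Sf (γ i j)) ∧ γ.det = 1}

/-- the principal congruence subgroup `Γ(q)`. -/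
def Gamma (q : ℕ) (d : ℕ) : Set (Matrix (Fin d) (Fin d) ℚ) :=
  {γ | γ ∈ SLZS Sf d ∧ ∀ i j, IsSInt Sf ((γ i j - if i = j then 1 else 0) / q)}

/-- the congruence subgroup `Γ₁(q)` (last row congruent to `e_d` mod `q`). -/
def Gamma1 (q : ℕ) (d : ℕ) (hd : 0 < d) : Set (Matrix (Fin d) (Fin d) ℚ) :=
  {γ | γ ∈ SLZS Sf d ∧ ∀ j : Fin d,
    IsSInt Sf ((γ ⟨d - 1, by omega⟩ j - if j = ⟨d - 1, by omega⟩ then 1 else 0) / q)}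

/-- `μ` is concentrated on `G` and invariant under right multiplication by elements of `G`. -/
def RightInvariantOn {d : ℕ} (μ : Measure (Mat Sf d)) (G : Set (Mat Sf d)) : Prop :=
  μ Gᶜ = 0 ∧ ∀ g ∈ G, Measure.map (fun x => x * g) μ = μ

/-- `μ̃_S` : Haar measure on `UL_d(ℚ_S)` normalized so that `SL_d(ℤ_S)\UL_d(ℚ_S)`
has measure one. -/
def IsHaarUL {d : ℕ} (μ : Measure (Mat Sf d)) : Prop :=
  RightInvariantOn Sf μ (ULset Sf d) ∧
    ∃ F₀, MeasurableSet F₀ ∧ IsStrictFD (matDiag Sf '' SLZS Sf d) (ULset Sf d) F₀ ∧ μ F₀ = 1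

/-- the fundamental domain `𝒯` of `ℤ_S^d` in `ℚ_S^d`. -/
def Tfund (d : ℕ) : Set (QV Sf d) :=
  {w | (∀ i, (w i).1 ∈ Set.Ico (0 : ℝ) 1) ∧ ∀ p : Sf, ∀ i, ‖(w i).2 p‖ ≤ 1}

/-- `vol` on `ℚ_S^d` : translation invariant, normalized on the fundamental domain `𝒯`. -/
def IsVol {d : ℕ} (vol : Measure (QV Sf d)) : Prop :=
  (∀ x : QV Sf d, Measure.map (fun y => x + y) vol = vol) ∧ vol (Tfund Sf d) = 1

/-- The Siegel transform of `f` evaluated at a point set `Λ`. -/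
def siegel {d : ℕ} (f : QV Sf d → ℝ) (Λ : Set (QV Sf d)) : ℝ := ∑' w : Λ, f w

/-- the translated lattice `(ℤ_S^d + ξ)·g`. -/
def affLat {d : ℕ} (ξ : QV Sf d) (g : Mat Sf d) : Set (QV Sf d) :=
  (fun k => Matrix.vecMul (ratVec Sf k + ξ) g) '' {k | IsSIntVec Sf k}

/-- evaluation of the quadratic form with (symmetric) coefficient matrix `A`. -/
def Qeval {d : ℕ} (A : Mat Sf d) (v : QV Sf d) : QS Sf :=
  dotProduct v (Matrix.mulVec A v)

def QNondeg {d : ℕ} (A : Mat Sf d) : Prop :=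
  (Matrix.det A).1 ≠ 0 ∧ ∀ p : Sf, (Matrix.det A).2 p ≠ 0

def QIsotropic {d : ℕ} (A : Mat Sf d) : Prop :=
  (∃ x : Fin d → ℝ, x ≠ 0 ∧ dotProduct x ((matInf Sf A).mulVec x) = 0) ∧
  ∀ p : Sf, ∃ x : Fin d → ℚ_[(p.1 : ℕ)], x ≠ 0 ∧
    dotProduct x ((matFin Sf A p).mulVec x) = 0

/-- index set for the parameters `T = (T_p)_{p ∈ S}`. -/
structure TIdx where
  inf : ℝ
  fin : (p : Sf) → ℤ

def TIdx.le {Sf : Finset Nat.Primes} (T T' : TIdx Sf) : Prop :=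
  T.inf ≤ T'.inf ∧ ∀ p, T.fin p ≤ T'.fin p

/-- `T_p = p^{t_p}` as a real number. -/
def TIdx.tp {Sf : Finset Nat.Primes} (T : TIdx Sf) (p : Sf) : ℝ :=
  ((p.1 : ℕ) : ℝ) ^ (T.fin p)

/-- `|T| = ∏_{p ∈ S} T_p`. -/
def TIdx.tvol {Sf : Finset Nat.Primes} (T : TIdx Sf) : ℝ := T.inf * ∏ p : Sf, T.tp p

/-- `n ∈ ℕ_S`. -/
def memNS (n : ℕ) : Prop := 0 < n ∧ ∀ p : Nat.Primes, p ∈ Sf → ¬((p : ℕ) ∣ n)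

/-- `m ∈ ℙ_S`. -/
def memPS (m : ℕ) : Prop := 0 < m ∧ ∀ p : Nat.Primes, (p : ℕ) ∣ m → p ∈ Sf

/-- `ζ_S(k) = ∑_{t ∈ ℕ_S} t^{-k}`. -/
def zetaS (k : ℕ) : ℝ := ∑' n : {n : ℕ // memNS Sf n}, ((n : ℕ) : ℝ) ^ (-(k : ℤ))

/-- `gcd(a, t) = 1` for an `S`-integer `a` (via an integer representative `a·m`, `m ∈ ℙ_S`). -/
def coprimeSInt (a : ℚ) (t : ℕ) : Prop :=
  ∃ m : ℕ, memPS Sf m ∧ (a * m).den = 1 ∧ Nat.Coprime ((a * m).num.natAbs) t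

/-- `gcd(q, v) = 1` for an `S`-integer vector `v`. -/
def coprimeVec {d : ℕ} (q : ℕ) (v : Fin d → ℚ) : Prop :=
  ∃ m : ℕ, memPS Sf m ∧ (∀ i, (v i * m).den = 1) ∧
    Nat.Coprime q (Finset.univ.gcd fun i => (v i * m).num.natAbs)

/-- The subgroup `H` of `UL_d(ℚ_S)` (first row equal to `e₁`). -/
def Hset (d : ℕ) (hd : 0 < d) : Set (Mat Sf d) :=
  {h | h ∈ ULset Sf d ∧ h ⟨0, hd⟩ ⟨0, hd⟩ = 1 ∧
    ∀ j : Fin d, j ≠ ⟨0, hd⟩ → h ⟨0, hd⟩ j = 0}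

/-- `H_{ℤ_S} = H ∩ SL_d(ℤ_S)` as rational matrices. -/
def HZS (d : ℕ) (hd : 0 < d) : Set (Matrix (Fin d) (Fin d) ℚ) :=
  {γ | γ ∈ SLZS Sf d ∧ γ ⟨0, hd⟩ ⟨0, hd⟩ = 1 ∧
    ∀ j : Fin d, j ≠ ⟨0, hd⟩ → γ ⟨0, hd⟩ j = 0}

/-- every place-component of `y` is nonzero. -/
def allPlacesNonzero {d : ℕ} (y : QV Sf d) : Prop :=
  (fun i => (y i).1) ≠ 0 ∧ ∀ p : Sf, (fun i => (y i).2 p) ≠ 0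

/-- the first standard basis vector `e₁` of `ℚ_S^d`. -/
def e1vec (d : ℕ) (hd : 0 < d) : QV Sf d := fun i => if i = ⟨0, hd⟩ then 1 else 0

end SArith

namespace SArith

/-- the block matrix `A` appearing in the map `Φ`. -/
def blockA {K : Type*} [Field K] {m : ℕ} (v' : Fin m → K) (g' : Matrix (Fin m) (Fin m) K) :
    Matrix (Fin (m + 1)) (Fin (m + 1)) K :=
  Matrix.of fun i j =>
    if hi : i.val = 0 then (if j.val = 0 then 1 else 0)
    else if hj : j.val = 0 then v' ⟨i.val - 1, by have := i.isLt; omega⟩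
    else g' ⟨i.val - 1, by have := i.isLt; omega⟩ ⟨j.val - 1, by have := j.isLt; omega⟩

/-- the matrix `B` appearing in the map `Φ` (first row `y`, `(2,2)` entry `1/y₁`,
remaining diagonal entries `1`, all other entries `0`). -/
def blockB {K : Type*} [Field K] {m : ℕ} (y : Fin (m + 1) → K) :
    Matrix (Fin (m + 1)) (Fin (m + 1)) K :=
  Matrix.of fun i j =>
    if i.val = 0 then y j
    else if i = j then (if i.val = 1 then (y 0)⁻¹ else 1)
    else 0

/-- the map `Φ`. -/
def Phi {K : Type*} [Field K] {m : ℕ}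
    (t : (Fin m → K) × Matrix (Fin m) (Fin m) K × (Fin (m + 1) → K)) :
    Matrix (Fin (m + 1)) (Fin (m + 1)) K :=
  blockA t.1 t.2.1 * blockB t.2.2

end SArith

open SArith


namespace Stmt4Aux
open SArith Matrix

variable {Sf : Finset Nat.Primes}

/-- The S-integers as a subring of ℚ. -/
def SInts (Sf : Finset Nat.Primes) : Subring ℚ where
  carrier := {z | IsSInt Sf z}
  zero_mem' := fun q _ => by rw [padicNorm.zero]; exact zero_le_one
  one_mem' := fun q _ => padicNorm.one.le
  add_mem' := fun {a b} ha hb q hq =>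
    le_trans padicNorm.nonarchimedean (max_le (ha q hq) (hb q hq))
  mul_mem' := fun {a b} ha hb q hq => by
    rw [padicNorm.mul]; exact mul_le_one₀ (ha q hq) (padicNorm.nonneg _) (hb q hq)
  neg_mem' := fun {a} ha q hq => by rw [padicNorm.neg]; exact ha q hq

lemma mem_SInts {z : ℚ} : z ∈ SInts Sf ↔ IsSInt Sf z := Iff.rfl

lemma det_mem {d : ℕ} {M : Matrix (Fin d) (Fin d) ℚ} (h : ∀ i j, IsSInt Sf (M i j)) :
    IsSInt Sf M.det := by
  rw [← mem_SInts, Matrix.det_apply']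
  exact sum_mem fun σ _ => mul_mem (intCast_mem _ _) (prod_mem fun i _ => h _ _)

lemma MS_mul {d : ℕ} {M N : Matrix (Fin d) (Fin d) ℚ} (hM : ∀ i j, IsSInt Sf (M i j))
    (hN : ∀ i j, IsSInt Sf (N i j)) : ∀ i j, IsSInt Sf ((M * N) i j) := fun i j => by
  rw [← mem_SInts, Matrix.mul_apply]
  exact sum_mem fun k _ => mul_mem (hM i k) (hN k j)

lemma VS_vecMul {d : ℕ} {v : Fin d → ℚ} {M : Matrix (Fin d) (Fin d) ℚ}
    (hv : ∀ i, IsSInt Sf (v i)) (hM : ∀ i j, IsSInt Sf (M i j)) :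
    ∀ j, IsSInt Sf ((v ᵥ* M) j) := fun j => by
  rw [← mem_SInts]
  show (∑ i, v i * M i j) ∈ SInts Sf
  exact sum_mem fun i _ => mul_mem (hv i) (hM i j)

lemma MS_inv {d : ℕ} {γ : Matrix (Fin d) (Fin d) ℚ} (h : γ ∈ SLZS Sf d) :
    ∀ i j, IsSInt Sf (γ⁻¹ i j) := by
  have hinv : γ⁻¹ = γ.adjugate := by
    rw [Matrix.inv_def, h.2]; simp
  rw [hinv]
  intro i j
  rw [Matrix.adjugate_apply]
  refine det_mem fun i' j' => ?_
  rw [Matrix.updateRow_apply]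
  split
  · rw [Pi.single_apply]
    split
    · exact mem_SInts.1 (one_mem _)
    · exact mem_SInts.1 (zero_mem _)
  · exact h.1 i' j'

lemma SLZS_isUnit_det {d : ℕ} {γ : Matrix (Fin d) (Fin d) ℚ} (h : γ ∈ SLZS Sf d) :
    IsUnit γ.det := by rw [h.2]; exact isUnit_one

lemma SLZS_inv_mul {d : ℕ} {γ : Matrix (Fin d) (Fin d) ℚ} (h : γ ∈ SLZS Sf d) :
    γ⁻¹ * γ = 1 := Matrix.nonsing_inv_mul γ (SLZS_isUnit_det h)

lemma SLZS_mul_inv {d : ℕ} {γ : Matrix (Fin d) (Fin d) ℚ} (h : γ ∈ SLZS Sf d) :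
    γ * γ⁻¹ = 1 := Matrix.mul_nonsing_inv γ (SLZS_isUnit_det h)

lemma det_inv_eq_one {d : ℕ} {γ : Matrix (Fin d) (Fin d) ℚ} (h : γ ∈ SLZS Sf d) :
    γ⁻¹.det = 1 := by
  have := congrArg Matrix.det (SLZS_inv_mul h)
  rwa [Matrix.det_mul, h.2, mul_one, Matrix.det_one] at this

/-- The diagonal embedding as a ring hom. -/
def dQ (Sf : Finset Nat.Primes) : ℚ →+* QS Sf :=
  (Rat.castHom ℝ).prod (Pi.ringHom fun p => Rat.castHom ℚ_[(p.1 : ℕ)])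

lemma diagQ_eq (x : ℚ) : diagQ Sf x = dQ Sf x := rfl

lemma diagQ_inj : Function.Injective (diagQ Sf) := fun a b h => by
  have : (a : ℝ) = b := congrArg Prod.fst h
  exact_mod_cast this

lemma matDiag_map {d : ℕ} (M : Matrix (Fin d) (Fin d) ℚ) :
    matDiag Sf M = M.map (dQ Sf) := rfl

lemma matDiag_mul {d : ℕ} (M N : Matrix (Fin d) (Fin d) ℚ) :
    matDiag Sf (M * N) = matDiag Sf M * matDiag Sf N := by
  rw [matDiag_map, matDiag_map, matDiag_map, Matrix.map_mul]

lemma det_matDiag {d : ℕ} (M : Matrix (Fin d) (Fin d) ℚ) :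
    (matDiag Sf M).det = diagQ Sf M.det := by
  rw [matDiag_map, diagQ_eq, RingHom.map_det, RingHom.mapMatrix_apply]

lemma ratVec_inj {d : ℕ} : Function.Injective (ratVec Sf (d := d)) := fun a b h =>
  funext fun i => diagQ_inj (congrFun h i)

lemma ratVec_add {d : ℕ} (a b : Fin d → ℚ) :
    ratVec Sf (a + b) = ratVec Sf a + ratVec Sf b :=
  funext fun i => by simp [ratVec, diagQ_eq, map_add]

lemma ratVec_sub {d : ℕ} (a b : Fin d → ℚ) :
    ratVec Sf (a - b) = ratVec Sf a - ratVec Sf b :=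
  funext fun i => by simp [ratVec, diagQ_eq, map_sub]

lemma ratVec_zero {d : ℕ} : ratVec Sf (0 : Fin d → ℚ) = 0 :=
  funext fun i => by simp [ratVec, diagQ_eq, map_zero]

lemma vecMul_ratVec {d : ℕ} (u : Fin d → ℚ) (M : Matrix (Fin d) (Fin d) ℚ) :
    (ratVec Sf u) ᵥ* (matDiag Sf M) = ratVec Sf (u ᵥ* M) := by
  funext j
  show ∑ i, dQ Sf (u i) * dQ Sf (M i j) = dQ Sf (∑ i, u i * M i j)
  rw [map_sum]
  exact Finset.sum_congr rfl fun i _ => (map_mul _ _ _).symm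

lemma UL_det_isUnit {d : ℕ} {g : Mat Sf d} (hg : g ∈ ULset Sf d) : IsUnit g.det := by
  refine IsUnit.of_mul_eq_one ⟨1, fun p => ((g.det).2 p)⁻¹⟩ ?_
  refine Prod.ext ?_ (funext fun p => ?_)
  · show (g.det).1 * 1 = 1
    rw [hg.1, mul_one]
  · show (g.det).2 p * ((g.det).2 p)⁻¹ = 1
    refine mul_inv_cancel₀ fun h0 => ?_
    have := hg.2 p
    rw [h0] at this
    simp at this

lemma vecMul_cancel {d : ℕ} {g : Mat Sf d} (hg : IsUnit g.det) {a b : QV Sf d}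
    (h : a ᵥ* g = b ᵥ* g) : a = b := by
  have h2 := congrArg (· ᵥ* g⁻¹) h
  simpa [Matrix.vecMul_vecMul, Matrix.mul_nonsing_inv g hg, Matrix.vecMul_one] using h2

lemma vecMul_std {R : Type*} [CommRing R] {d : ℕ} (M : Matrix (Fin d) (Fin d) R) (i : Fin d) :
    (fun j => if j = i then (1 : R) else 0) ᵥ* M = M i := by
  funext j
  show (∑ l, (if l = i then (1 : R) else 0) * M l j) = M i j
  rw [Finset.sum_eq_single i]
  · simp
  · intro b _ hb; simp [hb]
  · simp

lemma ratVec_std {d : ℕ} (i : Fin d) :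
    ratVec Sf (fun j => if j = i then (1 : ℚ) else 0)
      = fun j => if j = i then (1 : QS Sf) else 0 := by
  funext j
  rcases eq_or_ne j i with h | h <;> simp [ratVec, diagQ_eq, h]

lemma mem_affLat {d : ℕ} {ξ : QV Sf d} {g : Mat Sf d} {x : QV Sf d} :
    x ∈ affLat Sf ξ g ↔ ∃ k, IsSIntVec Sf k ∧ x = (ratVec Sf k + ξ) ᵥ* g :=
  ⟨fun ⟨k, hk, he⟩ => ⟨k, hk, he.symm⟩, fun ⟨k, hk, he⟩ => ⟨k, hk, he.symm⟩⟩

/-- Key lattice lemma: multiplying by a diagonal S-integral matrix preserving ξ mod ℤ_S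
preserves the affine lattice. -/
lemma affLat_matDiag {d : ℕ} (u : Fin d → ℚ) {δ : Matrix (Fin d) (Fin d) ℚ}
    (hδ : δ ∈ SLZS Sf d) (hw : IsSIntVec Sf (u ᵥ* δ - u)) (g : Mat Sf d) :
    affLat Sf (ratVec Sf u) (matDiag Sf δ * g) = affLat Sf (ratVec Sf u) g := by
  ext x
  simp only [mem_affLat]
  constructor
  · rintro ⟨k, hk, rfl⟩
    refine ⟨(k + u) ᵥ* δ - u, ?_, ?_⟩
    · have h1 : (k + u) ᵥ* δ - u = k ᵥ* δ + (u ᵥ* δ - u) := by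
        rw [Matrix.add_vecMul]; abel
      rw [h1]
      exact fun i => mem_SInts.1 (add_mem (mem_SInts.2 (VS_vecMul hk hδ.1 i)) (hw i))
    · rw [← ratVec_add, ← ratVec_add, sub_add_cancel, ← Matrix.vecMul_vecMul, vecMul_ratVec]
  · rintro ⟨k, hk, rfl⟩
    refine ⟨(k + u) ᵥ* δ⁻¹ - u, ?_, ?_⟩
    · have h2 : u ᵥ* δ⁻¹ - u = -((u ᵥ* δ - u) ᵥ* δ⁻¹) := by
        rw [Matrix.sub_vecMul, Matrix.vecMul_vecMul, SLZS_mul_inv hδ, Matrix.vecMul_one]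
        abel
      have h1 : (k + u) ᵥ* δ⁻¹ - u = k ᵥ* δ⁻¹ + (u ᵥ* δ⁻¹ - u) := by
        rw [Matrix.add_vecMul]; abel
      rw [h1, h2]
      exact fun i => mem_SInts.1 (add_mem (mem_SInts.2 (VS_vecMul hk (MS_inv hδ) i))
        (neg_mem (mem_SInts.2 (VS_vecMul hw (MS_inv hδ) i))))
    · rw [← ratVec_add, ← ratVec_add, sub_add_cancel, ← Matrix.vecMul_vecMul, vecMul_ratVec,
        Matrix.vecMul_vecMul, SLZS_inv_mul hδ, Matrix.vecMul_one]

/-- Extraction: an inclusion of affine lattices gives an S-integral diagonal matrix. -/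
lemma exists_delta {d : ℕ} {u : Fin d → ℚ} {g g' : Mat Sf d} (hg : g ∈ ULset Sf d)
    (h : affLat Sf (ratVec Sf u) g' ⊆ affLat Sf (ratVec Sf u) g) :
    ∃ δ : Matrix (Fin d) (Fin d) ℚ, (∀ i j, IsSInt Sf (δ i j)) ∧
      matDiag Sf δ * g = g' ∧ IsSIntVec Sf (u ᵥ* δ - u) := by
  have hdet := UL_det_isUnit hg
  have h0 : (ratVec Sf u) ᵥ* g' ∈ affLat Sf (ratVec Sf u) g' :=
    mem_affLat.2 ⟨0, fun i => mem_SInts.1 (zero_mem _), by rw [ratVec_zero, zero_add]⟩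
  obtain ⟨k₀, hk₀, he₀⟩ := mem_affLat.1 (h h0)
  have hrow : ∀ i : Fin d, ∃ k, IsSIntVec Sf k ∧ (ratVec Sf k) ᵥ* g = g' i := by
    intro i
    have hi : (ratVec Sf (fun j => if j = i then (1:ℚ) else 0) + ratVec Sf u) ᵥ* g'
        ∈ affLat Sf (ratVec Sf u) g' :=
      mem_affLat.2 ⟨_, fun j => by
        rcases eq_or_ne j i with h | h
        · simpa [h] using mem_SInts.1 (one_mem (SInts Sf))
        · simpa [h] using mem_SInts.1 (zero_mem (SInts Sf)), rfl⟩
    obtain ⟨k, hk, he⟩ := mem_affLat.1 (h hi)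
    refine ⟨k - k₀, fun j => mem_SInts.1 (sub_mem (mem_SInts.2 (hk j)) (mem_SInts.2 (hk₀ j))),
      ?_⟩
    have hsub : (ratVec Sf (fun j => if j = i then (1:ℚ) else 0)) ᵥ* g'
        = (ratVec Sf (k - k₀)) ᵥ* g := by
      have e1 : (ratVec Sf (fun j => if j = i then (1:ℚ) else 0)) ᵥ* g'
          = (ratVec Sf (fun j => if j = i then (1:ℚ) else 0) + ratVec Sf u) ᵥ* g'
            - (ratVec Sf u) ᵥ* g' := by
        rw [← Matrix.sub_vecMul, add_sub_cancel_right]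
      rw [e1, he, he₀, ← Matrix.sub_vecMul, ratVec_sub]
      congr 1
      abel
    rw [← hsub, ratVec_std, vecMul_std]
  choose k hkS hkrow using hrow
  have hentry : ∀ i j, ((matDiag Sf (Matrix.of k)) * g) i j = ((ratVec Sf (k i)) ᵥ* g) j :=
    fun i j => by rw [Matrix.mul_apply]; rfl
  have hmg : matDiag Sf (Matrix.of k) * g = g' :=
    Matrix.ext fun i j => (hentry i j).trans (congrFun (hkrow i) j)
  refine ⟨Matrix.of k, fun i j => hkS i j, hmg, ?_⟩
  have hcalc : ratVec Sf (u ᵥ* Matrix.of k) = ratVec Sf (k₀ + u) := by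
    refine vecMul_cancel hdet ?_
    rw [← vecMul_ratVec, Matrix.vecMul_vecMul, hmg, ratVec_add]
    exact he₀
  have h2 : u ᵥ* Matrix.of k - u = k₀ := by rw [ratVec_inj hcalc]; abel
  exact h2 ▸ hk₀

/-- coprimality forces `padicNorm p z = 1` at primes dividing `q`. -/
lemma norm_z_eq_one {d : ℕ} {q : ℕ} (hq : memNS Sf q) {vp : Fin d → ℚ}
    (hcop : coprimeVec Sf q vp) {z : ℚ} (hz : IsSInt Sf z) {row : Fin d → ℚ}
    (hrow : ∀ i, IsSInt Sf (row i)) (hvpz : vp = z • row) :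
    ∀ p : Nat.Primes, (p : ℕ) ∣ q → padicNorm p z = 1 := by
  intro p hpq
  have hpSf : p ∉ Sf := fun hin => hq.2 p hin hpq
  obtain ⟨m, hmPS, hden, hgcd⟩ := hcop
  have hpm : ¬ (p : ℕ) ∣ m := fun hdvd => hpSf (hmPS.2 p hdvd)
  have hgcdn : ¬ (p : ℕ) ∣ Finset.univ.gcd fun i => (vp i * m).num.natAbs := by
    intro hdvd
    have h1 : (p : ℕ) ∣ 1 := hgcd ▸ Nat.dvd_gcd hpq hdvd
    exact Nat.Prime.one_lt p.2 |>.ne' (Nat.dvd_one.1 h1)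
  have hex : ∃ i, ¬ (p : ℕ) ∣ (vp i * m).num.natAbs := by
    by_contra hall
    push_neg at hall
    exact hgcdn (Finset.dvd_gcd fun i _ => hall i)
  obtain ⟨i, hi⟩ := hex
  have hint : ((vp i * m).num : ℚ) = vp i * m := Rat.coe_int_num_of_den_eq_one (hden i)
  have h1 : padicNorm p (vp i * m) = 1 := by
    rw [← hint]
    refine (padicNorm.int_eq_one_iff _).2 fun hdvd => ?_
    exact hi (Int.natCast_dvd.1 hdvd)
  have hm1 : padicNorm p (m : ℚ) = 1 := (padicNorm.nat_eq_one_iff _).2 hpm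
  have hvi : padicNorm p (vp i) = 1 := by
    rw [padicNorm.mul, hm1, mul_one] at h1
    exact h1
  have hvpi : vp i = z * row i := by rw [hvpz]; rfl
  have h2 : padicNorm p z * padicNorm p (row i) = 1 := by
    rw [← padicNorm.mul, ← hvpi, hvi]
  have hzle : padicNorm p z ≤ 1 := hz p hpSf
  have hrle : padicNorm p (row i) ≤ 1 := hrow i p hpSf
  nlinarith [padicNorm.nonneg (p := ((p : ℕ))) z, padicNorm.nonneg (p := ((p : ℕ))) (row i)]

/-- division by q stays S-integral given coprimality. -/
lemma div_isSInt {q : ℕ} (hq0 : q ≠ 0) {z a w : ℚ} (hz : IsSInt Sf z) (ha : IsSInt Sf a)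
    (hw : IsSInt Sf w) (hzq : ∀ p : Nat.Primes, (p : ℕ) ∣ q → padicNorm p z = 1)
    (heq : z * a = q * w) : IsSInt Sf (a / q) := by
  intro p hp
  have hq0' : ((q : ℚ)) ≠ 0 := Nat.cast_ne_zero.2 hq0
  have hqn0 : padicNorm p (q : ℚ) ≠ 0 := padicNorm.nonzero hq0'
  rw [padicNorm.div]
  by_cases hpq : (p : ℕ) ∣ q
  · have hz1 := hzq p hpq
    have hkey : padicNorm p z * padicNorm p a = padicNorm p (q : ℚ) * padicNorm p w := by
      rw [← padicNorm.mul, ← padicNorm.mul, heq]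
    rw [hz1, one_mul] at hkey
    rw [hkey, mul_comm, mul_div_assoc, div_self hqn0, mul_one]
    exact hw p hp
  · have hq1 : padicNorm p (q : ℚ) = 1 := (padicNorm.nat_eq_one_iff _).2 hpq
    rw [hq1, div_one]
    exact ha p hp

variable {d : ℕ}

/-- last standard basis (row) vector. -/
def elv (L : Fin d) : Fin d → ℚ := fun j => if j = L then 1 else 0

lemma vecMul_elv (M : Matrix (Fin d) (Fin d) ℚ) (L : Fin d) : elv L ᵥ* M = M L :=
  vecMul_std M L

lemma elv_mem (L j : Fin d) : IsSInt Sf (elv L j) := by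
  unfold elv
  split
  · exact mem_SInts.1 (one_mem _)
  · exact mem_SInts.1 (zero_mem _)

lemma vp_eq_smul_row {vp : Fin d → ℚ} {γ : Matrix (Fin d) (Fin d) ℚ} (hγ : γ ∈ SLZS Sf d)
    {z : ℚ} {L : Fin d} (hel : vp ᵥ* γ⁻¹ = z • elv L) : vp = z • γ L := by
  calc vp = vp ᵥ* (γ⁻¹ * γ) := by rw [SLZS_inv_mul hγ, Matrix.vecMul_one]
    _ = (vp ᵥ* γ⁻¹) ᵥ* γ := (Matrix.vecMul_vecMul _ _ _).symm
    _ = (z • elv L) ᵥ* γ := by rw [hel]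
    _ = z • (elv L ᵥ* γ) := Matrix.smul_vecMul _ _ _
    _ = z • γ L := by rw [vecMul_elv]

/-- Direction (B): conjugating back into `Γ₁(q)`. -/
lemma memGamma1_of (hd : 0 < d) {q : ℕ} (hq : memNS Sf q)
    {vp : Fin d → ℚ} (hcop : coprimeVec Sf q vp)
    {γ : Matrix (Fin d) (Fin d) ℚ} (hγ : γ ∈ SLZS Sf d)
    {z : ℚ} (hz : IsSInt Sf z)
    (hel : vp ᵥ* γ⁻¹ = z • elv (⟨d - 1, Nat.sub_lt hd one_pos⟩ : Fin d))
    {δ : Matrix (Fin d) (Fin d) ℚ} (hδ : δ ∈ SLZS Sf d)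
    (hw₀ : IsSIntVec Sf ((fun i => vp i / q) ᵥ* δ - fun i => vp i / q)) :
    γ * δ * γ⁻¹ ∈ Gamma1 Sf q d hd := by
  have hqne : ((q : ℚ)) ≠ 0 := Nat.cast_ne_zero.2 hq.1.ne'
  set L : Fin d := (⟨d - 1, Nat.sub_lt hd one_pos⟩ : Fin d) with hL
  set u : Fin d → ℚ := fun i => vp i / q with hu
  set w₀ : Fin d → ℚ := u ᵥ* δ - u with hw0
  set w : Fin d → ℚ := w₀ ᵥ* γ⁻¹ with hwdef
  have hvpz : vp = z • γ L := vp_eq_smul_row hγ hel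
  have hqu : (q : ℚ) • u = vp := funext fun i => by
    show (q : ℚ) * (vp i / q) = vp i
    field_simp
  have hvpδ : vp ᵥ* δ = (q : ℚ) • w₀ + vp := by
    calc vp ᵥ* δ = ((q : ℚ) • u) ᵥ* δ := by rw [hqu]
      _ = (q : ℚ) • (u ᵥ* δ) := Matrix.smul_vecMul _ _ _
      _ = (q : ℚ) • (w₀ + u) := by rw [hw0, sub_add_cancel]
      _ = (q : ℚ) • w₀ + (q : ℚ) • u := smul_add _ _ _
      _ = (q : ℚ) • w₀ + vp := by rw [hqu]
  have key : z • ((γ * δ * γ⁻¹) L) = (q : ℚ) • w + z • elv L := by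
    calc z • ((γ * δ * γ⁻¹) L)
        = z • (elv L ᵥ* (γ * δ * γ⁻¹)) := by rw [vecMul_elv]
      _ = (z • elv L) ᵥ* (γ * δ * γ⁻¹) := (Matrix.smul_vecMul _ _ _).symm
      _ = (vp ᵥ* γ⁻¹) ᵥ* (γ * δ * γ⁻¹) := by rw [hel]
      _ = vp ᵥ* (γ⁻¹ * (γ * δ * γ⁻¹)) := Matrix.vecMul_vecMul _ _ _
      _ = vp ᵥ* (δ * γ⁻¹) := by
          rw [show γ⁻¹ * (γ * δ * γ⁻¹) = δ * γ⁻¹ from by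
            simp only [← mul_assoc]; rw [SLZS_inv_mul hγ, one_mul]]
      _ = (vp ᵥ* δ) ᵥ* γ⁻¹ := (Matrix.vecMul_vecMul _ _ _).symm
      _ = ((q : ℚ) • w₀ + vp) ᵥ* γ⁻¹ := by rw [hvpδ]
      _ = ((q : ℚ) • w₀) ᵥ* γ⁻¹ + vp ᵥ* γ⁻¹ := Matrix.add_vecMul _ _ _
      _ = (q : ℚ) • w + z • elv L := by rw [Matrix.smul_vecMul, hel, hwdef]
  have hzq : ∀ p : Nat.Primes, (p : ℕ) ∣ q → padicNorm p z = 1 :=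
    norm_z_eq_one hq hcop hz (fun i => hγ.1 L i) hvpz
  refine ⟨⟨MS_mul (MS_mul hγ.1 hδ.1) (MS_inv hγ), ?_⟩, ?_⟩
  · rw [Matrix.det_mul, Matrix.det_mul, hγ.2, hδ.2, det_inv_eq_one hγ]
    norm_num
  · intro j
    have hj := congrFun key j
    simp only [Pi.smul_apply, Pi.add_apply, smul_eq_mul] at hj
    have heqj : z * ((γ * δ * γ⁻¹) L j - elv L j) = (q : ℚ) * w j := by
      rw [mul_sub, hj]; ring
    have ha : IsSInt Sf ((γ * δ * γ⁻¹) L j - elv L j) :=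
      mem_SInts.1 (sub_mem (mem_SInts.2 ((MS_mul (MS_mul hγ.1 hδ.1) (MS_inv hγ)) L j))
        (mem_SInts.2 (elv_mem L j)))
    have hwj : IsSInt Sf (w j) := VS_vecMul hw₀ (MS_inv hγ) j
    exact div_isSInt hq.1.ne' hz ha hwj hzq heqj

/-- Direction (A): conjugating out of `Γ₁(q)`. -/
lemma conj_mem (hd : 0 < d) {q : ℕ} (hq : memNS Sf q)
    {vp : Fin d → ℚ}
    {γ : Matrix (Fin d) (Fin d) ℚ} (hγ : γ ∈ SLZS Sf d)
    {z : ℚ} (hz : IsSInt Sf z)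
    (hel : vp ᵥ* γ⁻¹ = z • elv (⟨d - 1, Nat.sub_lt hd one_pos⟩ : Fin d))
    {γ' : Matrix (Fin d) (Fin d) ℚ} (hγ' : γ' ∈ Gamma1 Sf q d hd) :
    (γ⁻¹ * γ' * γ ∈ SLZS Sf d) ∧
      IsSIntVec Sf ((fun i => vp i / q) ᵥ* (γ⁻¹ * γ' * γ) - fun i => vp i / q) := by
  have hqne : ((q : ℚ)) ≠ 0 := Nat.cast_ne_zero.2 hq.1.ne'
  set L : Fin d := (⟨d - 1, Nat.sub_lt hd one_pos⟩ : Fin d) with hL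
  set u : Fin d → ℚ := fun i => vp i / q with hu
  have hvpz : vp = z • γ L := vp_eq_smul_row hγ hel
  have hinvu : u = (q : ℚ)⁻¹ • vp := funext fun i => by
    show vp i / q = (q : ℚ)⁻¹ * vp i
    rw [div_eq_inv_mul]
  set c : Fin d → ℚ := fun j => (γ' L j - elv L j) / q with hc
  have hcS : ∀ j, IsSInt Sf (c j) := hγ'.2
  have hγ'L : γ' L = elv L + (q : ℚ) • c := funext fun j => by
    show γ' L j = elv L j + (q : ℚ) * ((γ' L j - elv L j) / q)
    rw [mul_div_cancel₀ _ hqne]; ring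
  have hkey : u ᵥ* (γ⁻¹ * γ' * γ) = u + z • (c ᵥ* γ) := by
    calc u ᵥ* (γ⁻¹ * γ' * γ)
        = ((q : ℚ)⁻¹ • vp) ᵥ* (γ⁻¹ * γ' * γ) := by rw [← hinvu]
      _ = (q : ℚ)⁻¹ • (vp ᵥ* (γ⁻¹ * γ' * γ)) := Matrix.smul_vecMul _ _ _
      _ = (q : ℚ)⁻¹ • (((vp ᵥ* γ⁻¹) ᵥ* γ') ᵥ* γ) := by
          rw [← Matrix.vecMul_vecMul, ← Matrix.vecMul_vecMul]
      _ = (q : ℚ)⁻¹ • (((z • elv L) ᵥ* γ') ᵥ* γ) := by rw [hel]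
      _ = (q : ℚ)⁻¹ • ((z • (elv L ᵥ* γ')) ᵥ* γ) := by rw [Matrix.smul_vecMul]
      _ = (q : ℚ)⁻¹ • ((z • (elv L + (q : ℚ) • c)) ᵥ* γ) := by rw [vecMul_elv, hγ'L]
      _ = (q : ℚ)⁻¹ • ((z • elv L) ᵥ* γ + ((z * q) • c) ᵥ* γ) := by
          rw [smul_add, smul_smul, Matrix.add_vecMul]
      _ = (q : ℚ)⁻¹ • (z • (elv L ᵥ* γ)) + ((q : ℚ)⁻¹ * (z * q)) • (c ᵥ* γ) := by
          rw [Matrix.smul_vecMul, Matrix.smul_vecMul, smul_add, smul_smul, smul_smul]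
      _ = u + z • (c ᵥ* γ) := by
          rw [vecMul_elv, ← hvpz, ← hinvu,
            show (q : ℚ)⁻¹ * (z * (q : ℚ)) = z from by field_simp]
  constructor
  · refine ⟨MS_mul (MS_mul (MS_inv hγ) hγ'.1.1) hγ.1, ?_⟩
    rw [Matrix.det_mul, Matrix.det_mul, det_inv_eq_one hγ, hγ'.1.2, hγ.2]
    norm_num
  · have : u ᵥ* (γ⁻¹ * γ' * γ) - u = z • (c ᵥ* γ) := by rw [hkey]; abel
    rw [show ((fun i => vp i / q) ᵥ* (γ⁻¹ * γ' * γ) - fun i => vp i / q)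
      = z • (c ᵥ* γ) from this]
    intro j
    rw [Pi.smul_apply, smul_eq_mul]
    exact mem_SInts.1 (mul_mem hz (mem_SInts.2 (VS_vecMul hcS hγ.1 j)))

end Stmt4Aux


/-- The identification of `Y_{v_p/q}` with `γ⁻¹Γ₁(q)γ\\UL_d(ℚ_S)`:
the assignment `(γ⁻¹Γ₁(q)γ)g ↦ (ℤ_S^d + v_p/q)g` is well defined and injective
(and it is surjective onto `Y_{v_p/q}` by definition). -/
theorem stmt4 (Sf : Finset Nat.Primes) (d : ℕ) (hd : 0 < d)
    (q : ℕ) (hq : memNS Sf q)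
    (vp : Fin d → ℚ) (hvp : IsSIntVec Sf vp) (hcop : coprimeVec Sf q vp)
    (γ : Matrix (Fin d) (Fin d) ℚ) (hγ : γ ∈ SLZS Sf d)
    (hγvp : ∃ z : ℚ, IsSInt Sf z ∧
      Matrix.vecMul vp γ⁻¹ = fun j : Fin d => if j = ⟨d - 1, by omega⟩ then z else 0) :
    ∀ g ∈ ULset Sf d, ∀ g' ∈ ULset Sf d,
      (affLat Sf (ratVec Sf fun i => vp i / q) g = affLat Sf (ratVec Sf fun i => vp i / q) g'
        ↔ ∃ γ' ∈ Gamma1 Sf q d hd, matDiag Sf (γ⁻¹ * γ' * γ) * g = g') := by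
    classical
  obtain ⟨z, hz, hzr⟩ := hγvp
  have hel : Matrix.vecMul vp γ⁻¹
      = z • Stmt4Aux.elv (⟨d - 1, Nat.sub_lt hd one_pos⟩ : Fin d) := by
    have h0 : Matrix.vecMul vp γ⁻¹
        = fun j : Fin d => if j = (⟨d - 1, Nat.sub_lt hd one_pos⟩ : Fin d) then z else 0 := hzr
    rw [h0]
    funext j
    by_cases hj : j = (⟨d - 1, Nat.sub_lt hd one_pos⟩ : Fin d) <;>
      simp [Stmt4Aux.elv, hj]
  intro g hg g' hg'
  constructor
  · intro h
    obtain ⟨δ, hδS, hδg, hδu⟩ := Stmt4Aux.exists_delta (u := fun i => vp i / q) hg h.symm.subset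
    have hdetδ : δ.det = 1 := by
      have h1 := congrArg Matrix.det hδg
      rw [Matrix.det_mul, Stmt4Aux.det_matDiag] at h1
      have h2 := congrArg Prod.fst h1
      simp only [Prod.fst_mul] at h2
      rw [hg.1, hg'.1, mul_one] at h2
      have h3 : ((δ.det : ℚ) : ℝ) = 1 := h2
      exact_mod_cast h3
    have hδ : δ ∈ SLZS Sf d := ⟨hδS, hdetδ⟩
    refine ⟨γ * δ * γ⁻¹, Stmt4Aux.memGamma1_of hd hq hcop hγ hz hel hδ hδu, ?_⟩
    have hsimp : γ⁻¹ * (γ * δ * γ⁻¹) * γ = δ := by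
      simp only [← mul_assoc]
      rw [Stmt4Aux.SLZS_inv_mul hγ, one_mul, mul_assoc, Stmt4Aux.SLZS_inv_mul hγ, mul_one]
    rw [hsimp]
    exact hδg
  · rintro ⟨γ', hγ'mem, hgg'⟩
    have hδ := Stmt4Aux.conj_mem hd hq hγ hz hel hγ'mem
    rw [← hgg']
    exact (Stmt4Aux.affLat_matDiag (fun i => vp i / q) hδ.1 hδ.2 g).symm
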